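/- The derivation module D(𝒜₂₄₀) of the central hyperplane arrangement 𝒜₂₄₀ in ℂ⁴ with defining equation Q₂₄₀ = x·y·z·w·(x+y+z)·(x+y−z+w)·(x−y+z+w)·(x−y−z−w) is not a free module over S = ℂ[x,y,z,w]. -/
import Mathlib


open MvPolynomial

noncomputable section

/-- The polynomial ring `S = ℂ[x,y,z,w]`, with `x = X 0`, `y = X 1`, `z = X 2`, `w = X 3`. -/
abbrev S4 : Type := MvPolynomial (Fin 4) ℂ

/-- The linear form `c₀·x + c₁·y + c₂·z + c₃·w` with coefficient vector `c`. -/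
noncomputable def linForm (c : Fin 4 → ℂ) : S4 := ∑ i, C (c i) * X i

/-- A polynomial derivation `θ = a₁∂ₓ + a₂∂_y + a₃∂_z + a₄∂_w` of `S` is identified with
its coefficient tuple `a : Fin 4 → S`; the linear map `derMap f` sends `a` to `θ(f)`. -/
noncomputable def derMap (f : S4) : (Fin 4 → S4) →ₗ[S4] S4 where
  toFun a := ∑ i, a i * pderiv i f
  map_add' a b := by simp [add_mul, Finset.sum_add_distrib]
  map_smul' c a := by simp [Finset.mul_sum, mul_assoc]

/-- The derivation module `D(𝒜)` of the central arrangement whose hyperplanes are the kernels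
of the linear forms `linForm (α H)`: all derivations `θ` with `θ(α_H) ∈ S·α_H` for every `H`. -/
noncomputable def derivModule {ι : Type} (α : ι → (Fin 4 → ℂ)) :
    Submodule S4 (Fin 4 → S4) :=
  ⨅ H, Submodule.comap (derMap (linForm (α H))) (Ideal.span {linForm (α H)})

end

/-- The coefficient vectors of the eight linear factors of Q = xyzw(x+y+z)(x+y-z+w)(x-y+z+w)(x-y-z-w), defining the rigid Cynk–Szemberg octic arrangement 𝒜₂₄₀ ⊂ ℙ³. -/
noncomputable def A240 : Fin 8 → (Fin 4 → ℂ) :=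
  ![![1, 0, 0, 0],
    ![0, 1, 0, 0],
    ![0, 0, 1, 0],
    ![0, 0, 0, 1],
    ![1, 1, 1, 0],
    ![1, 1, -1, 1],
    ![1, -1, 1, 1],
    ![1, -1, -1, -1]]

namespace A240Cert

noncomputable section
open MvPolynomial

/-- jet functional `∂_y ∂_w ∂_w` at the origin -/
def J1 (p : S4) : ℂ := eval (0 : Fin 4 → ℂ) (pderiv 1 (pderiv 3 (pderiv 3 p)))
/-- jet functional `∂_x ∂_w ∂_w` at the origin -/
def J0 (p : S4) : ℂ := eval (0 : Fin 4 → ℂ) (pderiv 0 (pderiv 3 (pderiv 3 p)))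
/-- jet functional `∂_x ∂_y ∂_w ∂_w` at the origin -/
def L1 (p : S4) : ℂ := eval (0 : Fin 4 → ℂ) (pderiv 0 (pderiv 1 (pderiv 3 (pderiv 3 p))))
/-- jet functional `∂_y ∂_y ∂_w ∂_w` at the origin -/
def L2 (p : S4) : ℂ := eval (0 : Fin 4 → ℂ) (pderiv 1 (pderiv 1 (pderiv 3 (pderiv 3 p))))

def U : Fin 4 → S4 := ![(2 : S4) * X 0 * X 1 * X 3^2 + X 0^2 * X 3^2 + ((-3) : S4) * X 0^2 * X 2^2 + (3 : S4) * X 0^2 * X 1^2 + X 0^3 * X 1 + ((-1) : S4) * X 0^4, ((-1) : S4) * X 1^2 * X 3^2 + (3 : S4) * X 1^2 * X 2^2 + X 1^4 + ((-2) : S4) * X 0 * X 1 * X 3^2 + (2 : S4) * X 0 * X 1^3, ((-1) : S4) * X 1 * X 2 * X 3^2 + X 1 * X 2^3 + (3 : S4) * X 1^3 * X 2 + X 0 * X 2 * X 3^2 + ((-1) : S4) * X 0 * X 2^3 + (3 : S4) * X 0 * X 1^2 * X 2 + ((-3) : S4) * X 0^3 * X 2, (3 : S4) * X 0^2 * X 1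 * X 3]

def V1 : Fin 4 → S4 := ![X 0 * X 2 * X 3^2 + ((-3) : S4) * X 0 * X 2^3 + ((-1) : S4) * X 0 * X 1 * X 3^2 + ((-3) : S4) * X 0 * X 1 * X 2^2 + (3 : S4) * X 0 * X 1^2 * X 2 + (3 : S4) * X 0 * X 1^3 + ((-1) : S4) * X 0^3 * X 2 + X 0^3 * X 1, ((-2) : S4) * X 1 * X 2 * X 3^2 + ((-1) : S4) * X 1^2 * X 3^2 + ((-3) : S4) * X 1^2 * X 2^2 + (2 : S4) * X 1^3 * X 2 + X 1^4 + (3 : S4) * X 0^2 * X 1^2, X 2^2 * X 3^2 + ((-1) : S4) * X 2^4 + (2 : S4) * X 1 * X 2 * X 3^2 + ((-2) : S4) * X 1 * X 2^3 + (3 : S4) * X 1^2 * X 2^2 + ((-3) : S4) * X 0^2 * X 2^2, (0 : S4)]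

def V2 : Fin 4 → S4 := ![(2 : S4) * X 0 * X 2 * X 3^2 + X 0^2 * X 3^2 + (3 : S4) * X 0^2 * X 2^2 + ((-3) : S4) * X 0^2 * X 1^2 + X 0^3 * X 2 + ((-1) : S4) * X 0^4, ((-1) : S4) * X 1 * X 2 * X 3^2 + (3 : S4) * X 1 * X 2^3 + X 1^3 * X 2 + X 0 * X 1 * X 3^2 + (3 : S4) * X 0 * X 1 * X 2^2 + ((-1) : S4) * X 0 * X 1^3 + ((-3) : S4) * X 0^3 * X 1, ((-1) : S4) * X 2^2 * X 3^2 + X 2^4 + (3 : S4) * X 1^2 * X 2^2 + ((-2) : S4) * X 0 * X 2 * X 3^2 + (2 : S4) * X 0 * X 2^3, (3 : S4) * X 0^2 * X 2 * X 3]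


lemma mem_iff {θ : Fin 4 → S4} :
    θ ∈ derivModule A240 ↔ ∀ H, linForm (A240 H) ∣ derMap (linForm (A240 H)) θ := by
  simp [derivModule, Submodule.mem_iInf, Submodule.mem_comap, Ideal.mem_span_singleton]

lemma lf0 : linForm (A240 0) = X 0 := by
  have e : A240 0 = ![1, 0, 0, 0] := rfl
  rw [e]; simp [linForm, Fin.sum_univ_four]; try ring

lemma lf1 : linForm (A240 1) = X 1 := by
  have e : A240 1 = ![0, 1, 0, 0] := rfl
  rw [e]; simp [linForm, Fin.sum_univ_four]; try ring

lemma lf2 : linForm (A240 2) = X 2 := by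
  have e : A240 2 = ![0, 0, 1, 0] := rfl
  rw [e]; simp [linForm, Fin.sum_univ_four]; try ring

lemma lf3 : linForm (A240 3) = X 3 := by
  have e : A240 3 = ![0, 0, 0, 1] := rfl
  rw [e]; simp [linForm, Fin.sum_univ_four]; try ring

lemma lf4 : linForm (A240 4) = X 0 + X 1 + X 2 := by
  have e : A240 4 = ![1, 1, 1, 0] := rfl
  rw [e]; simp [linForm, Fin.sum_univ_four]; try ring

lemma lf5 : linForm (A240 5) = X 0 + X 1 - X 2 + X 3 := by
  have e : A240 5 = ![1, 1, -1, 1] := rfl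
  rw [e]; simp [linForm, Fin.sum_univ_four]; try ring

lemma lf6 : linForm (A240 6) = X 0 - X 1 + X 2 + X 3 := by
  have e : A240 6 = ![1, -1, 1, 1] := rfl
  rw [e]; simp [linForm, Fin.sum_univ_four]; try ring

lemma lf7 : linForm (A240 7) = X 0 - X 1 - X 2 - X 3 := by
  have e : A240 7 = ![1, -1, -1, -1] := rfl
  rw [e]; simp [linForm, Fin.sum_univ_four]; try ring

lemma der0 (θ : Fin 4 → S4) : derMap (X 0) θ = θ 0 := by
  simp [derMap, Fin.sum_univ_four]; try ring

lemma der1 (θ : Fin 4 → S4) : derMap (X 1) θ = θ 1 := by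
  simp [derMap, Fin.sum_univ_four]; try ring

lemma der2 (θ : Fin 4 → S4) : derMap (X 2) θ = θ 2 := by
  simp [derMap, Fin.sum_univ_four]; try ring

lemma der3 (θ : Fin 4 → S4) : derMap (X 3) θ = θ 3 := by
  simp [derMap, Fin.sum_univ_four]; try ring

lemma der4 (θ : Fin 4 → S4) : derMap (X 0 + X 1 + X 2) θ = θ 0 + θ 1 + θ 2 := by
  simp [derMap, Fin.sum_univ_four]; try ring

lemma der5 (θ : Fin 4 → S4) : derMap (X 0 + X 1 - X 2 + X 3) θ = θ 0 + θ 1 - θ 2 + θ 3 := by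
  simp [derMap, Fin.sum_univ_four]; try ring

lemma der6 (θ : Fin 4 → S4) : derMap (X 0 - X 1 + X 2 + X 3) θ = θ 0 - θ 1 + θ 2 + θ 3 := by
  simp [derMap, Fin.sum_univ_four]; try ring

lemma der7 (θ : Fin 4 → S4) : derMap (X 0 - X 1 - X 2 - X 3) θ = θ 0 - θ 1 - θ 2 - θ 3 := by
  simp [derMap, Fin.sum_univ_four]; try ring

lemma memU : U ∈ derivModule A240 := by
  rw [mem_iff]
  intro H
  fin_cases H
  · show linForm (A240 0) ∣ derMap (linForm (A240 0)) U
    rw [lf0, der0]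
    exact ⟨(2 : S4) * X 1 * X 3^2 + X 0 * X 3^2 + ((-3) : S4) * X 0 * X 2^2 + (3 : S4) * X 0 * X 1^2 + X 0^2 * X 1 + ((-1) : S4) * X 0^3, by simp [U]; try ring⟩
  · show linForm (A240 1) ∣ derMap (linForm (A240 1)) U
    rw [lf1, der1]
    exact ⟨((-1) : S4) * X 1 * X 3^2 + (3 : S4) * X 1 * X 2^2 + X 1^3 + ((-2) : S4) * X 0 * X 3^2 + (2 : S4) * X 0 * X 1^2, by simp [U]; try ring⟩
  · show linForm (A240 2) ∣ derMap (linForm (A240 2)) U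
    rw [lf2, der2]
    exact ⟨((-1) : S4) * X 1 * X 3^2 + X 1 * X 2^2 + (3 : S4) * X 1^3 + X 0 * X 3^2 + ((-1) : S4) * X 0 * X 2^2 + (3 : S4) * X 0 * X 1^2 + ((-3) : S4) * X 0^3, by simp [U]; try ring⟩
  · show linForm (A240 3) ∣ derMap (linForm (A240 3)) U
    rw [lf3, der3]
    exact ⟨(3 : S4) * X 0^2 * X 1, by simp [U]; try ring⟩
  · show linForm (A240 4) ∣ derMap (linForm (A240 4)) U
    rw [lf4, der4]
    exact ⟨((-1) : S4) * X 1 * X 3^2 + X 1 * X 2^2 + (2 : S4) * X 1^2 * X 2 + X 1^3 + X 0 * X 3^2 + ((-1) : S4) * X 0 * X 2^2 + X 0 * X 1^2 + ((-2) : S4) * X 0^2 * X 2 + (2 : S4) * X 0^2 * X 1 + ((-1) : S4) * X 0^3, by simp [U]; try ring⟩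
  · show linForm (A240 5) ∣ derMap (linForm (A240 5)) U
    rw [lf5, der5]
    exact ⟨X 1 * X 2 * X 3 + X 1 * X 2^2 + ((-1) : S4) * X 1^2 * X 3 + ((-2) : S4) * X 1^2 * X 2 + X 1^3 + ((-1) : S4) * X 0 * X 2 * X 3 + ((-1) : S4) * X 0 * X 2^2 + X 0 * X 1^2 + X 0^2 * X 3 + (2 : S4) * X 0^2 * X 2 + (2 : S4) * X 0^2 * X 1 + ((-1) : S4) * X 0^3, by simp [U]; try ring⟩
  · show linForm (A240 6) ∣ derMap (linForm (A240 6)) U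
    rw [lf6, der6]
    exact ⟨((-1) : S4) * X 1 * X 2 * X 3 + X 1 * X 2^2 + X 1^2 * X 3 + ((-2) : S4) * X 1^2 * X 2 + X 1^3 + X 0 * X 2 * X 3 + ((-1) : S4) * X 0 * X 2^2 + (4 : S4) * X 0 * X 1 * X 3 + ((-2) : S4) * X 0 * X 1 * X 2 + (3 : S4) * X 0 * X 1^2 + X 0^2 * X 3 + ((-2) : S4) * X 0^2 * X 2 + ((-1) : S4) * X 0^3, by simp [U]; try ring⟩
  · show linForm (A240 7) ∣ derMap (linForm (A240 7)) U
    rw [lf7, der7]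
    exact ⟨((-1) : S4) * X 1 * X 2 * X 3 + X 1 * X 2^2 + ((-1) : S4) * X 1^2 * X 3 + (2 : S4) * X 1^2 * X 2 + X 1^3 + X 0 * X 2 * X 3 + ((-1) : S4) * X 0 * X 2^2 + ((-4) : S4) * X 0 * X 1 * X 3 + (2 : S4) * X 0 * X 1 * X 2 + (3 : S4) * X 0 * X 1^2 + ((-1) : S4) * X 0^2 * X 3 + (2 : S4) * X 0^2 * X 2 + ((-1) : S4) * X 0^3, by simp [U]; try ring⟩

lemma memV1 : V1 ∈ derivModule A240 := by
  rw [mem_iff]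
  intro H
  fin_cases H
  · show linForm (A240 0) ∣ derMap (linForm (A240 0)) V1
    rw [lf0, der0]
    exact ⟨X 2 * X 3^2 + ((-3) : S4) * X 2^3 + ((-1) : S4) * X 1 * X 3^2 + ((-3) : S4) * X 1 * X 2^2 + (3 : S4) * X 1^2 * X 2 + (3 : S4) * X 1^3 + ((-1) : S4) * X 0^2 * X 2 + X 0^2 * X 1, by simp [V1]; try ring⟩
  · show linForm (A240 1) ∣ derMap (linForm (A240 1)) V1
    rw [lf1, der1]
    exact ⟨((-2) : S4) * X 2 * X 3^2 + ((-1) : S4) * X 1 * X 3^2 + ((-3) : S4) * X 1 * X 2^2 + (2 : S4) * X 1^2 * X 2 + X 1^3 + (3 : S4) * X 0^2 * X 1, by simp [V1]; try ring⟩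
  · show linForm (A240 2) ∣ derMap (linForm (A240 2)) V1
    rw [lf2, der2]
    exact ⟨X 2 * X 3^2 + ((-1) : S4) * X 2^3 + (2 : S4) * X 1 * X 3^2 + ((-2) : S4) * X 1 * X 2^2 + (3 : S4) * X 1^2 * X 2 + ((-3) : S4) * X 0^2 * X 2, by simp [V1]; try ring⟩
  · show linForm (A240 3) ∣ derMap (linForm (A240 3)) V1
    rw [lf3, der3]
    exact ⟨(0 : S4), by simp [V1]; try ring⟩
  · show linForm (A240 4) ∣ derMap (linForm (A240 4)) V1
    rw [lf4, der4]
    exact ⟨X 2 * X 3^2 + ((-1) : S4) * X 2^3 + ((-1) : S4) * X 1 * X 3^2 + ((-1) : S4) * X 1 * X 2^2 + X 1^2 * X 2 + X 1^3 + ((-2) : S4) * X 0 * X 2^2 + (2 : S4) * X 0 * X 1^2 + ((-1) : S4) * X 0^2 * X 2 + X 0^2 * X 1, by simp [V1]; try ring⟩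
  · show linForm (A240 5) ∣ derMap (linForm (A240 5)) V1
    rw [lf5, der5]
    exact ⟨((-1) : S4) * X 2^2 * X 3 + ((-1) : S4) * X 2^3 + ((-4) : S4) * X 1 * X 2 * X 3 + ((-3) : S4) * X 1 * X 2^2 + ((-1) : S4) * X 1^2 * X 3 + (3 : S4) * X 1^2 * X 2 + X 1^3 + X 0 * X 2 * X 3 + (2 : S4) * X 0 * X 2^2 + ((-1) : S4) * X 0 * X 1 * X 3 + (2 : S4) * X 0 * X 1 * X 2 + (2 : S4) * X 0 * X 1^2 + ((-1) : S4) * X 0^2 * X 2 + X 0^2 * X 1, by simp [V1]; try ring⟩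
  · show linForm (A240 6) ∣ derMap (linForm (A240 6)) V1
    rw [lf6, der6]
    exact ⟨X 2^2 * X 3 + ((-1) : S4) * X 2^3 + (4 : S4) * X 1 * X 2 * X 3 + ((-3) : S4) * X 1 * X 2^2 + X 1^2 * X 3 + (3 : S4) * X 1^2 * X 2 + X 1^3 + X 0 * X 2 * X 3 + ((-2) : S4) * X 0 * X 2^2 + ((-1) : S4) * X 0 * X 1 * X 3 + ((-2) : S4) * X 0 * X 1 * X 2 + ((-2) : S4) * X 0 * X 1^2 + ((-1) : S4) * X 0^2 * X 2 + X 0^2 * X 1, by simp [V1]; try ring⟩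
  · show linForm (A240 7) ∣ derMap (linForm (A240 7)) V1
    rw [lf7, der7]
    exact ⟨X 2^2 * X 3 + ((-1) : S4) * X 2^3 + ((-1) : S4) * X 1 * X 2^2 + ((-1) : S4) * X 1^2 * X 3 + X 1^2 * X 2 + X 1^3 + ((-1) : S4) * X 0 * X 2 * X 3 + (2 : S4) * X 0 * X 2^2 + X 0 * X 1 * X 3 + ((-2) : S4) * X 0 * X 1^2 + ((-1) : S4) * X 0^2 * X 2 + X 0^2 * X 1, by simp [V1]; try ring⟩

lemma memV2 : V2 ∈ derivModule A240 := by
  rw [mem_iff]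
  intro H
  fin_cases H
  · show linForm (A240 0) ∣ derMap (linForm (A240 0)) V2
    rw [lf0, der0]
    exact ⟨(2 : S4) * X 2 * X 3^2 + X 0 * X 3^2 + (3 : S4) * X 0 * X 2^2 + ((-3) : S4) * X 0 * X 1^2 + X 0^2 * X 2 + ((-1) : S4) * X 0^3, by simp [V2]; try ring⟩
  · show linForm (A240 1) ∣ derMap (linForm (A240 1)) V2
    rw [lf1, der1]
    exact ⟨((-1) : S4) * X 2 * X 3^2 + (3 : S4) * X 2^3 + X 1^2 * X 2 + X 0 * X 3^2 + (3 : S4) * X 0 * X 2^2 + ((-1) : S4) * X 0 * X 1^2 + ((-3) : S4) * X 0^3, by simp [V2]; try ring⟩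
  · show linForm (A240 2) ∣ derMap (linForm (A240 2)) V2
    rw [lf2, der2]
    exact ⟨((-1) : S4) * X 2 * X 3^2 + X 2^3 + (3 : S4) * X 1^2 * X 2 + ((-2) : S4) * X 0 * X 3^2 + (2 : S4) * X 0 * X 2^2, by simp [V2]; try ring⟩
  · show linForm (A240 3) ∣ derMap (linForm (A240 3)) V2
    rw [lf3, der3]
    exact ⟨(3 : S4) * X 0^2 * X 2, by simp [V2]; try ring⟩
  · show linForm (A240 4) ∣ derMap (linForm (A240 4)) V2
    rw [lf4, der4]
    exact ⟨((-1) : S4) * X 2 * X 3^2 + X 2^3 + (2 : S4) * X 1 * X 2^2 + X 1^2 * X 2 + X 0 * X 3^2 + X 0 * X 2^2 + ((-1) : S4) * X 0 * X 1^2 + (2 : S4) * X 0^2 * X 2 + ((-2) : S4) * X 0^2 * X 1 + ((-1) : S4) * X 0^3, by simp [V2]; try ring⟩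
  · show linForm (A240 5) ∣ derMap (linForm (A240 5)) V2
    rw [lf5, der5]
    exact ⟨X 2^2 * X 3 + X 2^3 + ((-1) : S4) * X 1 * X 2 * X 3 + ((-2) : S4) * X 1 * X 2^2 + X 1^2 * X 2 + (4 : S4) * X 0 * X 2 * X 3 + (3 : S4) * X 0 * X 2^2 + X 0 * X 1 * X 3 + ((-2) : S4) * X 0 * X 1 * X 2 + ((-1) : S4) * X 0 * X 1^2 + X 0^2 * X 3 + ((-2) : S4) * X 0^2 * X 1 + ((-1) : S4) * X 0^3, by simp [V2]; try ring⟩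
  · show linForm (A240 6) ∣ derMap (linForm (A240 6)) V2
    rw [lf6, der6]
    exact ⟨((-1) : S4) * X 2^2 * X 3 + X 2^3 + X 1 * X 2 * X 3 + ((-2) : S4) * X 1 * X 2^2 + X 1^2 * X 2 + X 0 * X 2^2 + ((-1) : S4) * X 0 * X 1 * X 3 + ((-1) : S4) * X 0 * X 1^2 + X 0^2 * X 3 + (2 : S4) * X 0^2 * X 2 + (2 : S4) * X 0^2 * X 1 + ((-1) : S4) * X 0^3, by simp [V2]; try ring⟩
  · show linForm (A240 7) ∣ derMap (linForm (A240 7)) V2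
    rw [lf7, der7]
    exact ⟨((-1) : S4) * X 2^2 * X 3 + X 2^3 + ((-1) : S4) * X 1 * X 2 * X 3 + (2 : S4) * X 1 * X 2^2 + X 1^2 * X 2 + ((-4) : S4) * X 0 * X 2 * X 3 + (3 : S4) * X 0 * X 2^2 + X 0 * X 1 * X 3 + (2 : S4) * X 0 * X 1 * X 2 + ((-1) : S4) * X 0 * X 1^2 + ((-1) : S4) * X 0^2 * X 3 + (2 : S4) * X 0^2 * X 1 + ((-1) : S4) * X 0^3, by simp [V2]; try ring⟩


/-- The jet conditions satisfied by every element of the derivation module. -/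
lemma conds {θ : Fin 4 → S4} (h : θ ∈ derivModule A240) :
    J1 (θ 0) = 0 ∧ J0 (θ 1) = 0 ∧ J0 (θ 2) = 0 ∧ J1 (θ 2) = 0 ∧
      J1 (θ 0) + J1 (θ 1) + J1 (θ 2) = J0 (θ 0) + J0 (θ 1) + J0 (θ 2) := by
  rw [mem_iff] at h
  have h0 := h 0; rw [lf0, der0] at h0
  have h1 := h 1; rw [lf1, der1] at h1
  have h2 := h 2; rw [lf2, der2] at h2
  have h4 := h 4; rw [lf4, der4] at h4
  obtain ⟨q0, hq0⟩ := h0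
  obtain ⟨q1, hq1⟩ := h1
  obtain ⟨q2, hq2⟩ := h2
  obtain ⟨q4, hq4⟩ := h4
  refine ⟨?_, ?_, ?_, ?_, ?_⟩
  · rw [J1, hq0]; simp [pderiv_mul]
  · rw [J0, hq1]; simp [pderiv_mul]
  · rw [J0, hq2]; simp [pderiv_mul]
  · rw [J1, hq2]; simp [pderiv_mul]
  · have e1 : J1 (θ 0) + J1 (θ 1) + J1 (θ 2) = J1 (θ 0 + θ 1 + θ 2) := by
      simp [J1]
    have e0 : J0 (θ 0) + J0 (θ 1) + J0 (θ 2) = J0 (θ 0 + θ 1 + θ 2) := by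
      simp [J0]
    rw [e1, e0, hq4, J1, J0]
    simp [pderiv_mul]

lemma expandL1 (p q : S4) : L1 (X 0 * p + X 1 * q) = J1 p + J0 q := by
  simp [L1, J1, J0, pderiv_mul]
  try ring

lemma expandL2 (p q : S4) : L2 (X 0 * p + X 1 * q) = 2 * J1 q := by
  simp [L2, J1, pderiv_mul]
  try ring

/-- the separating functional vanishes on `X 0 • D + X 1 • D` -/
lemma lam_zero {θ η : Fin 4 → S4} (hθ : θ ∈ derivModule A240) (hη : η ∈ derivModule A240) :
    -(2 : ℂ) * L1 (X 0 * θ 0 + X 1 * η 0) + L2 (X 0 * θ 1 + X 1 * η 1) = 0 := by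
  obtain ⟨a1, _, _, _, _⟩ := conds hθ
  obtain ⟨b1, b2, b3, b4, b5⟩ := conds hη
  rw [expandL1, expandL2]
  have h15 : J1 (η 1) = J0 (η 0) := by linear_combination b5 - b1 + b2 + b3 - b4
  linear_combination (-2 : ℂ) * a1 + 2 * h15


set_option maxHeartbeats 2000000 in
/-- the separating functional does not vanish on `U` -/
lemma lam_U : -(2 : ℂ) * L1 (U 0) + L2 (U 1) ≠ 0 := by
  have e1 : L1 (U 0) = 4 := by
    simp [U, L1, pderiv_mul, pderiv_pow, map_ofNat]
    norm_num [map_ofNat]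
  have e2 : L2 (U 1) = -4 := by
    simp [U, L2, pderiv_mul, pderiv_pow, map_ofNat]
    norm_num [map_ofNat]
  rw [e1, e2]
  norm_num

/-- the syzygy `z·U = x·V1 + y·V2` -/
lemma rel : (X 2 : S4) • U = (X 0 : S4) • V1 + (X 1 : S4) • V2 := by
  funext i
  fin_cases i <;>
    simp [U, V1, V2, Pi.smul_apply, smul_eq_mul] <;> ring

/-- multiplying out of the span of two variables -/
lemma key (p q r : S4) (h : X 2 * p = X 0 * q + X 1 * r) :
    ∃ a b, p = X 0 * a + X 1 * b := by
  have himg : (MvPolynomial.X '' ({0, 1} : Set (Fin 4)) : Set S4) = {X 0, X 1} := by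
    simp [Set.image_insert_eq]
  have hmem : X 2 * p ∈ Ideal.span ({X 0, X 1} : Set S4) :=
    Ideal.mem_span_pair.mpr ⟨q, r, by rw [h]; ring⟩
  rw [← himg, mem_ideal_span_X_image] at hmem
  have hp : p ∈ Ideal.span (MvPolynomial.X '' ({0, 1} : Set (Fin 4)) : Set S4) := by
    rw [mem_ideal_span_X_image]
    intro m hm
    have hmm : Finsupp.single (2 : Fin 4) 1 + m ∈ (X 2 * p).support := by
      rw [support_X_mul]
      exact Finset.mem_map_of_mem _ hm
    obtain ⟨i, hi, hne⟩ := hmem _ hmm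
    refine ⟨i, hi, fun h0 => hne ?_⟩
    have hi2 : i ≠ 2 := by
      rcases hi with rfl | rfl <;> decide
    simp [Finsupp.add_apply, Finsupp.single_apply, h0, (Ne.symm hi2)]
  rw [himg, Ideal.mem_span_pair] at hp
  obtain ⟨a, b, hab⟩ := hp
  exact ⟨a, b, by rw [← hab]; ring⟩

end

end A240Cert

open A240Cert in
/-- The derivation module of 𝒜₂₄₀ is not a free `S`-module. -/
theorem not_free_A240 : ¬ Module.Free S4 ↥(derivModule A240) := by
  classical
  intro hF
  obtain ⟨⟨I, b⟩⟩ := hF.exists_basis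
  set D := derivModule A240 with hD
  let uD : D := ⟨U, memU⟩
  let v1D : D := ⟨V1, memV1⟩
  let v2D : D := ⟨V2, memV2⟩
  have hrel : (X 2 : S4) • uD = (X 0 : S4) • v1D + (X 1 : S4) • v2D := by
    apply Subtype.ext
    show (X 2 : S4) • U = (X 0 : S4) • V1 + (X 1 : S4) • V2
    exact rel
  have hj : ∀ j : I, X 2 * b.repr uD j = X 0 * b.repr v1D j + X 1 * b.repr v2D j := by
    intro j
    have h1 := congrArg (fun t : D => b.repr t j) hrel
    simpa using h1
  choose f g hfg using fun j => key _ _ _ (hj j)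
  let A : I →₀ S4 := Finsupp.onFinset (b.repr uD).support
    (fun j => if b.repr uD j = 0 then 0 else f j)
    (fun j hj' => by
      rw [Finsupp.mem_support_iff]
      intro hz
      simp [hz] at hj')
  let B : I →₀ S4 := Finsupp.onFinset (b.repr uD).support
    (fun j => if b.repr uD j = 0 then 0 else g j)
    (fun j hj' => by
      rw [Finsupp.mem_support_iff]
      intro hz
      simp [hz] at hj')
  have hAB : b.repr uD = (X 0 : S4) • A + (X 1 : S4) • B := by
    refine DFunLike.ext _ _ fun j => ?_
    by_cases hz : b.repr uD j = 0
    · simp [A, B, hz, Finsupp.onFinset_apply]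
    · simpa [A, B, hz, Finsupp.onFinset_apply] using hfg j
  have hU' : uD = (X 0 : S4) • b.repr.symm A + (X 1 : S4) • b.repr.symm B := by
    apply b.repr.injective
    rw [map_add, map_smul, map_smul, LinearEquiv.apply_symm_apply, LinearEquiv.apply_symm_apply]
    exact hAB
  set θD : D := b.repr.symm A
  set ηD : D := b.repr.symm B
  have hamb : U = (X 0 : S4) • (θD : Fin 4 → S4) + (X 1 : S4) • (ηD : Fin 4 → S4) := by
    have := congrArg (Subtype.val : D → (Fin 4 → S4)) hU'
    simpa using this
  have h0 : U 0 = X 0 * (θD : Fin 4 → S4) 0 + X 1 * (ηD : Fin 4 → S4) 0 := by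
    rw [hamb]; simp
  have h1 : U 1 = X 0 * (θD : Fin 4 → S4) 1 + X 1 * (ηD : Fin 4 → S4) 1 := by
    rw [hamb]; simp
  apply lam_U
  rw [h0, h1]
  exact lam_zero θD.2 ηD.2
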